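/- Let n ≥ 0 be an integer and let I be one of the sets {a^n b, a}, {a^n b, b}, {b^n a, a}, {b^n a, b}, {b a^n, a}, {b a^n, b}, {a b^n, a}, {a b^n, b}. Then LL(I) = L_I^ε, i.e., the shuffle closure of I coincides with the language generated by the unitary grammar associated with I. -/

import Mathlib

namespace ShuffleWqo

inductive AB : Type
  | a : AB
  | b : AB
  deriving DecidableEq

open AB

/-- The word `a^n`. -/
def wa (n : ℕ) : List AB := List.replicate n a

/-- The word `b^n`. -/
def wb (n : ℕ) : List AB := List.replicate n b

/-- Concatenation power of a word: `npow u e = u^e`. -/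
def npow (u : List AB) : ℕ → List AB
  | 0 => []
  | n + 1 => u ++ npow u n

/-- `Shuffle u v w` means `w` is a shuffle of `u` and `v`. -/
inductive Shuffle {α : Type*} : List α → List α → List α → Prop
  | nil : Shuffle [] [] []
  | left {x : α} {u v w : List α} : Shuffle u v w → Shuffle (x :: u) v (x :: w)
  | right {x : α} {u v w : List α} : Shuffle u v w → Shuffle u (x :: v) (x :: w)

/-- One derivation step: `w` is obtained from `v` by shuffling in a word of `I`. -/
def Derives {α : Type*} (I : Set (List α)) (v w : List α) : Prop :=
  ∃ u ∈ I, Shuffle v u w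

/-- The reflexive-transitive closure `⊢*_I`. -/
def DerivesStar {α : Type*} (I : Set (List α)) : List α → List α → Prop :=
  Relation.ReflTransGen (Derives I)

/-- The shuffle closure `LL(I)` of a set of words `I`. -/
def LL {α : Type*} (I : Set (List α)) : Set (List α) := { w | DerivesStar I [] w }

/-- `r` is a well quasi-order on the language `L`. -/
def IsWqoOn {α : Type*} (r : List α → List α → Prop) (L : Set (List α)) : Prop :=
  ∀ f : ℕ → List α, (∀ n, f n ∈ L) → ∃ i j, i < j ∧ r (f i) (f j)

/-- One step of the unitary grammar: insert a word of `I` as a factor. -/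
def Inserts {α : Type*} (I : Set (List α)) (v w : List α) : Prop :=
  ∃ u ∈ I, ∃ v₁ v₂ : List α, v = v₁ ++ v₂ ∧ w = v₁ ++ u ++ v₂

/-- The language `L_I^ε` generated by the unitary grammar associated with `I`. -/
def LEps {α : Type*} (I : Set (List α)) : Set (List α) :=
  { w | Relation.ReflTransGen (Inserts I) [] w }

variable {α : Type*}

lemma shuffle_nil_left (u : List α) : Shuffle [] u u := by
  induction u with
  | nil => exact .nil
  | cons x t ih => exact .right ih

lemma shuffle_nil_right (u : List α) : Shuffle u [] u := by
  induction u with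
  | nil => exact .nil
  | cons x t ih => exact .left ih

lemma Shuffle.append {u₁ v₁ w₁ u₂ v₂ w₂ : List α} (h₁ : Shuffle u₁ v₁ w₁)
    (h₂ : Shuffle u₂ v₂ w₂) : Shuffle (u₁ ++ u₂) (v₁ ++ v₂) (w₁ ++ w₂) := by
  induction h₁ with
  | nil => exact h₂
  | left _ ih => exact .left ih
  | right _ ih => exact .right ih

lemma inserts_derives {I : Set (List α)} {v w : List α} (h : Inserts I v w) :
    Derives I v w := by
  obtain ⟨u, hu, v₁, v₂, rfl, rfl⟩ := h
  refine ⟨u, hu, ?_⟩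
  have := (shuffle_nil_right v₁).append ((shuffle_nil_left u).append (shuffle_nil_right v₂))
  simpa using this

lemma LEps_subset_LL (I : Set (List α)) : LEps I ⊆ LL I := fun w h =>
  Relation.ReflTransGen.mono (fun _ _ => inserts_derives) _ _ h

lemma Shuffle.count [DecidableEq α] {u v w : List α} (h : Shuffle u v w) (x : α) :
    w.count x = u.count x + v.count x := by
  induction h with
  | nil => rfl
  | left _ ih => simp [List.count_cons, ih]; omega
  | right _ ih => simp [List.count_cons, ih]; omega

lemma shuffle_prefix {u v w p : List α} (h : Shuffle u v w) (hp : p <+: w) :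
    ∃ p₁ p₂, p₁ <+: u ∧ p₂ <+: v ∧ Shuffle p₁ p₂ p := by
  induction h generalizing p with
  | nil =>
    exact ⟨[], [], List.nil_prefix, List.nil_prefix, by simpa [List.prefix_nil.mp hp] using Shuffle.nil⟩
  | @left x u v w _ ih =>
    cases p with
    | nil => exact ⟨[], [], List.nil_prefix, List.nil_prefix, .nil⟩
    | cons y p' =>
      obtain ⟨heq, hp'⟩ := List.cons_prefix_cons.mp hp
      obtain ⟨p₁, p₂, h1, h2, hs⟩ := ih hp'
      exact ⟨y :: p₁, p₂, List.cons_prefix_cons.mpr ⟨heq, h1⟩, h2, .left hs⟩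
  | @right x u v w _ ih =>
    cases p with
    | nil => exact ⟨[], [], List.nil_prefix, List.nil_prefix, .nil⟩
    | cons y p' =>
      obtain ⟨heq, hp'⟩ := List.cons_prefix_cons.mp hp
      obtain ⟨p₁, p₂, h1, h2, hs⟩ := ih hp'
      exact ⟨p₁, y :: p₂, h1, List.cons_prefix_cons.mpr ⟨heq, h2⟩, .right hs⟩

lemma shuffle_suffix {u v w s : List α} (h : Shuffle u v w) (hs : s <:+ w) :
    ∃ s₁ s₂, s₁ <:+ u ∧ s₂ <:+ v ∧ Shuffle s₁ s₂ s := by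
  induction h generalizing s with
  | nil =>
    exact ⟨[], [], List.nil_suffix, List.nil_suffix, by simpa [List.suffix_nil.mp hs] using Shuffle.nil⟩
  | @left x u v w hsh ih =>
    rcases List.suffix_cons_iff.mp hs with rfl | hs'
    · exact ⟨x :: u, v, List.suffix_refl _, List.suffix_refl _, .left hsh⟩
    · obtain ⟨s₁, s₂, h1, h2, hss⟩ := ih hs'
      exact ⟨s₁, s₂, h1.trans (List.suffix_cons x u), h2, hss⟩
  | @right x u v w hsh ih =>
    rcases List.suffix_cons_iff.mp hs with rfl | hs'
    · exact ⟨u, x :: v, List.suffix_refl _, List.suffix_refl _, .right hsh⟩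
    · obtain ⟨s₁, s₂, h1, h2, hss⟩ := ih hs'
      exact ⟨s₁, s₂, h1, h2.trans (List.suffix_cons x v), hss⟩


open AB

@[simp] lemma count_a_repl (m : ℕ) : (List.replicate m a).count a = m := by
  simp [List.count_replicate]

@[simp] lemma count_b_repl (m : ℕ) : (List.replicate m a).count b = 0 := by
  simp [List.count_replicate]

def S1 (n : ℕ) (w : List AB) : Prop := ∀ p, p <+: w → n * p.count b ≤ p.count a

def S2 (n : ℕ) (w : List AB) : Prop :=
  n ∣ w.count a ∧ ∀ s, s <:+ w → s.count a ≤ n * s.count b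

lemma prefix_u1 {n : ℕ} {p : List AB} (hp : p <+: wa n ++ [b]) :
    n * p.count b ≤ p.count a := by
  by_cases hb : b ∈ p
  · rcases List.prefix_or_prefix_of_prefix (List.prefix_append (wa n) [b]) hp with h | h
    · have h1 : n ≤ p.count a := by
        have := h.sublist.count_le a
        simpa [wa] using this
      have h2 : p.count b ≤ 1 := by
        have := hp.sublist.count_le b
        simpa [wa] using this
      calc n * p.count b ≤ n * 1 := Nat.mul_le_mul_left n h2
        _ = n := Nat.mul_one n
        _ ≤ p.count a := h1
    · have : b = a := List.eq_of_mem_replicate (h.subset hb)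
      exact absurd this (by simp)
  · simp [List.count_eq_zero.mpr hb]

lemma suffix_u1 {n : ℕ} {s : List AB} (hs : s <:+ wa n ++ [b]) :
    s.count a ≤ n * s.count b := by
  rcases List.suffix_or_suffix_of_suffix (List.suffix_append (wa n) [b]) hs with h | h
  · have h1 : 1 ≤ s.count b := by
      have : b ∈ s := h.subset (by simp)
      exact List.count_pos_iff.mpr this
    have h2 : s.count a ≤ n := by
      have := hs.sublist.count_le a
      simpa [wa] using this
    calc s.count a ≤ n := h2
      _ = n * 1 := (Nat.mul_one n).symm
      _ ≤ n * s.count b := Nat.mul_le_mul_left n h1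
  · rcases List.suffix_cons_iff.mp h with rfl | h'
    · simp
    · simp [List.suffix_nil.mp h']

lemma LL1_sub {n : ℕ} {w : List AB} (h : w ∈ LL {wa n ++ [b], [a]}) : S1 n w := by
  induction h with
  | refl =>
    intro p hp
    simp [List.prefix_nil.mp hp]
  | tail _ hd ih =>
    obtain ⟨u, hu, hsh⟩ := hd
    intro p hp
    obtain ⟨p₁, p₂, h1, h2, hs⟩ := shuffle_prefix hsh hp
    have hca := hs.count a
    have hcb := hs.count b
    have hp1 : n * p₁.count b ≤ p₁.count a := ih p₁ h1
    have hp2 : n * p₂.count b ≤ p₂.count a := by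
      rcases hu with rfl | rfl
      · exact prefix_u1 h2
      · have : b ∉ p₂ := fun hb => by
          have := h2.subset hb
          simp at this
        simp [List.count_eq_zero.mpr this]
    rw [hca, hcb, Nat.mul_add]
    exact Nat.add_le_add hp1 hp2

lemma LL2_sub {n : ℕ} {w : List AB} (h : w ∈ LL {wa n ++ [b], [b]}) : S2 n w := by
  induction h with
  | refl =>
    exact ⟨dvd_zero n, fun s hs => by simp [List.suffix_nil.mp hs]⟩
  | tail _ hd ih =>
    obtain ⟨u, hu, hsh⟩ := hd
    obtain ⟨ihd, ihs⟩ := ih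
    constructor
    · rw [hsh.count a]
      rcases hu with rfl | rfl
      · exact Dvd.dvd.add ihd (by simp [wa])
      · simpa using ihd
    · intro s hs
      obtain ⟨s₁, s₂, h1, h2, hss⟩ := shuffle_suffix hsh hs
      have hs1 : s₁.count a ≤ n * s₁.count b := ihs s₁ h1
      have hs2 : s₂.count a ≤ n * s₂.count b := by
        rcases hu with rfl | rfl
        · exact suffix_u1 h2
        · have : a ∉ s₂ := fun ha => by
            have := h2.subset ha
            simp at this
          simp [List.count_eq_zero.mpr this]
      rw [hss.count a, hss.count b, Nat.mul_add]
      exact Nat.add_le_add hs1 hs2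

lemma first_b {w : List AB} (h : b ∈ w) :
    ∃ p y, w = List.replicate p a ++ b :: y := by
  induction w with
  | nil => simp at h
  | cons x t ih =>
    cases x with
    | b => exact ⟨0, t, rfl⟩
    | a =>
      have hb : b ∈ t := by simpa using h
      obtain ⟨p, y, rfl⟩ := ih hb
      exact ⟨p + 1, y, by simp [List.replicate_succ]⟩

lemma all_a {w : List AB} (h : b ∉ w) : w = List.replicate w.length a := by
  rw [List.eq_replicate_length]
  intro x hx
  cases x with
  | a => rfl
  | b => exact absurd hx h

lemma prefix_append_cases {q l₁ l₂ : List AB} (hq : q <+: l₁ ++ l₂) :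
    q <+: l₁ ∨ ∃ q₂, q₂ <+: l₂ ∧ q = l₁ ++ q₂ := by
  rcases List.prefix_or_prefix_of_prefix hq (List.prefix_append l₁ l₂) with h | h
  · exact Or.inl h
  · obtain ⟨t, rfl⟩ := h
    exact Or.inr ⟨t, (List.prefix_append_right_inj l₁).mp hq, rfl⟩

lemma suffix_append_cases {s l₁ l₂ : List AB} (hs : s <:+ l₁ ++ l₂) :
    s <:+ l₂ ∨ ∃ s₁, s₁ <:+ l₁ ∧ s = s₁ ++ l₂ := by
  rcases List.suffix_or_suffix_of_suffix hs (List.suffix_append l₁ l₂) with h | h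
  · exact Or.inl h
  · obtain ⟨t, rfl⟩ := h
    obtain ⟨t', ht'⟩ := hs
    refine Or.inr ⟨t, ⟨t', ?_⟩, rfl⟩
    have : t' ++ t ++ l₂ = l₁ ++ l₂ := by simpa [List.append_assoc] using ht'
    exact (List.append_left_injective l₂ this : _)

lemma sub_replicate {q : List AB} {m : ℕ} (h : q <+: List.replicate m a) :
    q = List.replicate q.length a := by
  apply all_a
  intro hb
  exact absurd (List.eq_of_mem_replicate (h.subset hb)) (by simp)

lemma suffix_replicate {q : List AB} {m : ℕ} (h : q <:+ List.replicate m a) :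
    q = List.replicate q.length a := by
  apply all_a
  intro hb
  exact absurd (List.eq_of_mem_replicate (h.subset hb)) (by simp)

lemma S1_sub_LEps (n : ℕ) : ∀ k w, w.length ≤ k → S1 n w →
    w ∈ LEps {wa n ++ [b], [a]} := by
  intro k
  induction k with
  | zero =>
    intro w hlen _
    have : w = [] := List.length_eq_zero_iff.mp (Nat.le_zero.mp hlen)
    subst this
    exact Relation.ReflTransGen.refl
  | succ k ih =>
    intro w hlen hS
    rcases eq_or_ne w [] with rfl | hw
    · exact Relation.ReflTransGen.refl
    by_cases hb : b ∈ w
    · obtain ⟨p, y, rfl⟩ := first_b hb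
      have hsplit : List.replicate p a ++ b :: y = (List.replicate p a ++ [b]) ++ y := by simp
      have hn : n ≤ p := by
        have := hS (List.replicate p a ++ [b]) (hsplit ▸ List.prefix_append _ _)
        simpa using this
      have hr : S1 n (List.replicate (p - n) a ++ y) := by
        intro q hq
        rcases prefix_append_cases hq with h | ⟨q₂, hq₂, rfl⟩
        · have := sub_replicate h
          rw [this]
          simp
        · have hq' : (List.replicate p a ++ [b]) ++ q₂ <+: List.replicate p a ++ b :: y := by
            rw [hsplit]
            exact (List.prefix_append_right_inj _).mpr hq₂
          have := hS _ hq'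
          simp [List.count_append, Nat.mul_add] at this ⊢
          omega
      have hrlen : (List.replicate (p - n) a ++ y).length ≤ k := by
        simp at hlen ⊢
        omega
      refine Relation.ReflTransGen.tail (ih _ hrlen hr)
        ⟨wa n ++ [b], by simp, List.replicate (p - n) a, y, rfl, ?_⟩
      have hrepl : List.replicate p a = List.replicate (p - n) a ++ List.replicate n a := by
        rw [← List.replicate_add]
        congr 1
        omega
      rw [hrepl]
      simp only [wa, List.append_assoc, List.cons_append, List.singleton_append, List.nil_append]
    · have hw' : w = List.replicate w.length a := all_a hb
      obtain ⟨m, hm⟩ : ∃ m, w.length = m + 1 := by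
        cases hL : w.length with
        | zero => exact absurd (List.length_eq_zero_iff.mp hL) hw
        | succ m => exact ⟨m, rfl⟩
      have hww : w = List.replicate m a ++ [a] := by
        rw [hw', hm, List.replicate_succ']
      have hr : S1 n (List.replicate m a) := by
        intro q hq
        rw [sub_replicate hq]
        simp
      have hrlen : (List.replicate m a).length ≤ k := by simp; omega
      refine Relation.ReflTransGen.tail (ih _ hrlen hr)
        ⟨[a], by simp, List.replicate m a, [], by simp, by simp [hww]⟩

lemma S2_sub_LEps (n : ℕ) : ∀ k w, w.length ≤ k → S2 n w →
    w ∈ LEps {wa n ++ [b], [b]} := by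
  intro k
  induction k with
  | zero =>
    intro w hlen _
    have : w = [] := List.length_eq_zero_iff.mp (Nat.le_zero.mp hlen)
    subst this
    exact Relation.ReflTransGen.refl
  | succ k ih =>
    intro w hlen hS
    rcases eq_or_ne w [] with rfl | hw
    · exact Relation.ReflTransGen.refl
    obtain ⟨hdvd, hsuf⟩ := hS
    have hbw : b ∈ w := by
      by_contra hb
      have h1 := all_a hb
      have h2 := hsuf w (List.suffix_refl w)
      rw [h1] at h2
      simp at h2
      exact hw (by rw [h1, h2]; rfl)
    obtain ⟨p, y, rfl⟩ := first_b hbw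
    have hcw : (List.replicate p a ++ b :: y).count a = p + y.count a := by
      simp [List.count_append, List.count_cons]
    have hsplit : List.replicate p a ++ b :: y = (List.replicate p a ++ [b]) ++ y := by simp
    have hysuf : y <:+ List.replicate p a ++ b :: y := by
      rw [hsplit]; exact List.suffix_append _ _
    have hAB : y.count a ≤ n * y.count b := hsuf y hysuf
    have hwhole : p + y.count a ≤ n * y.count b + n := by
      have := hsuf _ (List.suffix_refl (List.replicate p a ++ b :: y))
      simpa [List.count_append, List.count_cons, Nat.mul_add, Nat.mul_one] using this
    by_cases hn : n ≤ p
    · -- remove a^n b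
      have hr : S2 n (List.replicate (p - n) a ++ y) := by
        constructor
        · have h1 : n ∣ p + y.count a := by rwa [hcw] at hdvd
          have h2 : n ∣ (p + y.count a) - n := Nat.dvd_sub h1 (dvd_refl n)
          have h3 : (List.replicate (p - n) a ++ y).count a = (p + y.count a) - n := by
            simp [List.count_append]
            omega
          rwa [h3]
        · intro s hs
          rcases suffix_append_cases hs with h | ⟨s₁, hs₁, rfl⟩
          · exact hsuf s (h.trans hysuf)
          · rw [suffix_replicate hs₁]
            have horig : List.replicate (s₁.length + n) a ++ b :: y <:+
                List.replicate p a ++ b :: y := by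
              have hq : s₁.length ≤ p - n := by
                have := hs₁.length_le
                simpa using this
              refine ⟨List.replicate (p - (s₁.length + n)) a, ?_⟩
              rw [← List.append_assoc, ← List.replicate_add]
              congr 2
              omega
            have := hsuf _ horig
            simp [List.count_append, List.count_cons, Nat.mul_add, Nat.mul_one] at this ⊢
            omega
      have hrlen : (List.replicate (p - n) a ++ y).length ≤ k := by
        simp at hlen ⊢
        omega
      refine Relation.ReflTransGen.tail (ih _ hrlen hr)
        ⟨wa n ++ [b], by simp, List.replicate (p - n) a, y, rfl, ?_⟩
      have hrepl : List.replicate p a = List.replicate (p - n) a ++ List.replicate n a := by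
        rw [← List.replicate_add]
        congr 1
        omega
      rw [hrepl]
      simp only [wa, List.append_assoc, List.cons_append, List.singleton_append, List.nil_append]
    · -- p < n : remove the b
      push_neg at hn
      have hnpos : 0 < n := lt_of_le_of_lt (Nat.zero_le p) hn
      have hkey : p + y.count a ≤ n * y.count b := by
        by_contra hcon
        push_neg at hcon
        obtain ⟨m, hm⟩ : n ∣ p + y.count a := by rwa [hcw] at hdvd
        have h1 : y.count b < m := by
          have : n * y.count b < n * m := by omega
          exact Nat.lt_of_mul_lt_mul_left this
        have h2 : m ≤ y.count b + 1 := by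
          have : n * m ≤ n * (y.count b + 1) := by
            rw [← hm, Nat.mul_add, Nat.mul_one]
            exact hwhole
          exact Nat.le_of_mul_le_mul_left this hnpos
        have hm' : m = y.count b + 1 := by omega
        rw [hm', Nat.mul_add, Nat.mul_one] at hm
        omega
      have hr : S2 n (List.replicate p a ++ y) := by
        constructor
        · have : (List.replicate p a ++ y).count a = p + y.count a := by
            simp [List.count_append]
          rw [this, ← hcw]
          exact hdvd
        · intro s hs
          rcases suffix_append_cases hs with h | ⟨s₁, hs₁, rfl⟩
          · exact hsuf s (h.trans hysuf)
          · rw [suffix_replicate hs₁]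
            have hq : s₁.length ≤ p := by
              have := hs₁.length_le
              simpa using this
            simp only [List.count_append, count_a_repl, count_b_repl, Nat.zero_add]
            omega
      have hrlen : (List.replicate p a ++ y).length ≤ k := by
        simp at hlen ⊢
        omega
      exact Relation.ReflTransGen.tail (ih _ hrlen hr)
        ⟨[b], by simp, List.replicate p a, y, rfl, by simp⟩

lemma core1 (n : ℕ) : LL {wa n ++ [b], [a]} = LEps {wa n ++ [b], [a]} := by
  apply le_antisymm
  · intro w hw
    exact S1_sub_LEps n w.length w le_rfl (LL1_sub hw)
  · exact LEps_subset_LL _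

lemma core2 (n : ℕ) : LL {wa n ++ [b], [b]} = LEps {wa n ++ [b], [b]} := by
  apply le_antisymm
  · intro w hw
    exact S2_sub_LEps n w.length w le_rfl (LL2_sub hw)
  · exact LEps_subset_LL _

lemma shuffle_map {α β : Type*} (f : α → β) {u v w : List α} (h : Shuffle u v w) :
    Shuffle (u.map f) (v.map f) (w.map f) := by
  induction h with
  | nil => exact .nil
  | left _ ih => exact .left ih
  | right _ ih => exact .right ih

lemma shuffle_reverse {α : Type*} {u v w : List α} (h : Shuffle u v w) :
    Shuffle u.reverse v.reverse w.reverse := by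
  induction h with
  | nil => exact .nil
  | @left x u v w _ ih =>
    simp only [List.reverse_cons]
    simpa using ih.append (shuffle_nil_right [x])
  | @right x u v w _ ih =>
    simp only [List.reverse_cons]
    simpa using ih.append (shuffle_nil_left [x])

lemma LL_G (G : List AB → List AB) (hnil : G [] = [])
    (hsh : ∀ {u v w : List AB}, Shuffle u v w → Shuffle (G u) (G v) (G w))
    (I : Set (List AB)) {w : List AB} (h : w ∈ LL I) : G w ∈ LL (G '' I) := by
  have : Relation.ReflTransGen (Derives (G '' I)) (G []) (G w) := by
    induction h with
    | refl => exact .refl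
    | tail _ hd ih =>
      obtain ⟨u, hu, hsh'⟩ := hd
      exact .tail ih ⟨G u, ⟨u, hu, rfl⟩, hsh hsh'⟩
  rwa [hnil] at this

lemma LEps_G (G : List AB → List AB) (hnil : G [] = [])
    (hins : ∀ (J : Set (List AB)) {v w : List AB}, Inserts J v w → Inserts (G '' J) (G v) (G w))
    (I : Set (List AB)) {w : List AB} (h : w ∈ LEps I) : G w ∈ LEps (G '' I) := by
  have : Relation.ReflTransGen (Inserts (G '' I)) (G []) (G w) := by
    induction h with
    | refl => exact .refl
    | tail _ hd ih => exact .tail ih (hins I hd)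
  rwa [hnil] at this

lemma transfer (G : List AB → List AB) (hnil : G [] = []) (hinv : ∀ w, G (G w) = w)
    (hsh : ∀ {u v w : List AB}, Shuffle u v w → Shuffle (G u) (G v) (G w))
    (hins : ∀ (J : Set (List AB)) {v w : List AB}, Inserts J v w → Inserts (G '' J) (G v) (G w))
    (I : Set (List AB)) (h : LL I = LEps I) : LL (G '' I) = LEps (G '' I) := by
  have himg : G '' (G '' I) = I := by
    rw [Set.image_image]
    simp [hinv]
  ext w
  constructor
  · intro hw
    have h1 := LL_G G hnil hsh (G '' I) hw
    rw [himg, h] at h1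
    have h2 := LEps_G G hnil hins I h1
    rwa [hinv] at h2
  · intro hw
    have h1 := LEps_G G hnil hins (G '' I) hw
    rw [himg, ← h] at h1
    have h2 := LL_G G hnil hsh I h1
    rwa [hinv] at h2

def sw : AB → AB
  | a => b
  | b => a

@[simp] lemma sw_a : sw a = b := rfl
@[simp] lemma sw_b : sw b = a := rfl
@[simp] lemma sw_sw (x : AB) : sw (sw x) = x := by cases x <;> rfl

lemma transfer_map (I : Set (List AB)) (h : LL I = LEps I) :
    LL ((List.map sw) '' I) = LEps ((List.map sw) '' I) := by
  refine transfer _ rfl (fun w => by simp [List.map_map, Function.comp_def]) (shuffle_map sw) ?_ I h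
  rintro J v w ⟨u, hu, v₁, v₂, rfl, rfl⟩
  exact ⟨u.map sw, ⟨u, hu, rfl⟩, v₁.map sw, v₂.map sw, by simp, by simp⟩

lemma transfer_rev (I : Set (List AB)) (h : LL I = LEps I) :
    LL (List.reverse '' I) = LEps (List.reverse '' I) := by
  refine transfer _ rfl (fun w => by simp) shuffle_reverse ?_ I h
  rintro J v w ⟨u, hu, v₁, v₂, rfl, rfl⟩
  exact ⟨u.reverse, ⟨u, hu, rfl⟩, v₂.reverse, v₁.reverse, by simp, by simp⟩

lemma img1 (n : ℕ) : (List.map sw) '' {wa n ++ [b], [b]} = {wb n ++ [a], [a]} := by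
  rw [Set.image_pair]
  simp [wa, wb]

lemma img2 (n : ℕ) : (List.map sw) '' {wa n ++ [b], [a]} = {wb n ++ [a], [b]} := by
  rw [Set.image_pair]
  simp [wa, wb]

lemma img3 (n : ℕ) : List.reverse '' {wa n ++ [b], [a]} = {[b] ++ wa n, [a]} := by
  rw [Set.image_pair]
  simp [wa]

lemma img4 (n : ℕ) : List.reverse '' {wa n ++ [b], [b]} = {[b] ++ wa n, [b]} := by
  rw [Set.image_pair]
  simp [wa]

lemma img5 (n : ℕ) : List.reverse '' {wb n ++ [a], [a]} = {[a] ++ wb n, [a]} := by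
  rw [Set.image_pair]
  simp [wb]

lemma img6 (n : ℕ) : List.reverse '' {wb n ++ [a], [b]} = {[a] ++ wb n, [b]} := by
  rw [Set.image_pair]
  simp [wb]

theorem stmt11 (n : ℕ) (I : Set (List AB))
    (hI : I = {wa n ++ [b], [a]} ∨ I = {wa n ++ [b], [b]} ∨
          I = {wb n ++ [a], [a]} ∨ I = {wb n ++ [a], [b]} ∨
          I = {[b] ++ wa n, [a]} ∨ I = {[b] ++ wa n, [b]} ∨
          I = {[a] ++ wb n, [a]} ∨ I = {[a] ++ wb n, [b]}) :
    LL I = LEps I := by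
  have h1 := core1 n
  have h2 := core2 n
  have h3 : LL {wb n ++ [a], [a]} = LEps {wb n ++ [a], [a]} := by
    rw [← img1 n]; exact transfer_map _ h2
  have h4 : LL {wb n ++ [a], [b]} = LEps {wb n ++ [a], [b]} := by
    rw [← img2 n]; exact transfer_map _ h1
  have h5 : LL {[b] ++ wa n, [a]} = LEps {[b] ++ wa n, [a]} := by
    rw [← img3 n]; exact transfer_rev _ h1
  have h6 : LL {[b] ++ wa n, [b]} = LEps {[b] ++ wa n, [b]} := by
    rw [← img4 n]; exact transfer_rev _ h2
  have h7 : LL {[a] ++ wb n, [a]} = LEps {[a] ++ wb n, [a]} := by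
    rw [← img5 n]; exact transfer_rev _ h3
  have h8 : LL {[a] ++ wb n, [b]} = LEps {[a] ++ wb n, [b]} := by
    rw [← img6 n]; exact transfer_rev _ h4
  rcases hI with rfl | rfl | rfl | rfl | rfl | rfl | rfl | rfl <;> assumption

end ShuffleWqo
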